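/- Let k ≥ 1 be an integer and let a : ℕ → ℂ be finitely supported. Then |∑_{n=1}^∞ ((n+1)^{2k} − n^{2k})·Im(conj(a_n)·a_{n+1})| ≤ (2^{2k} − 1)·∑_{n=1}^∞ n^{2k}·|a_n|². -/

import Mathlib

open Complex

/-- Weak-coupling estimate for the planar rotating molecule: for `k ≥ 1` and a
finitely supported `a : ℕ → ℂ`,
`|∑_{n=1}^∞ ((n+1)^{2k} − n^{2k})·Im(conj(a_n)·a_{n+1})|
  ≤ (2^{2k} − 1)·∑_{n=1}^∞ n^{2k}·|a_n|²`.
(The sums over `n ≥ 1` are written as sums over `n : ℕ` of the terms of index `n+1`.) -/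
theorem molecule_weak_coupling_bound (k : ℕ) (hk : 1 ≤ k) (a : ℕ → ℂ)
    (ha : (Function.support a).Finite) :
    |∑' n : ℕ, ((((n + 1) + 1 : ℕ) : ℝ) ^ (2 * k) - (((n + 1 : ℕ)) : ℝ) ^ (2 * k))
        * ((starRingEnd ℂ) (a (n + 1)) * a (n + 2)).im|
      ≤ (2 ^ (2 * k) - 1) * ∑' n : ℕ, (((n + 1 : ℕ) : ℝ)) ^ (2 * k) * ‖a (n + 1)‖ ^ 2 := by
  obtain ⟨N, hN⟩ := ha.bddAbove
  have hz : ∀ n, N < n → a n = 0 := by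
    intro n hn
    by_contra h
    exact absurd (hN h) (not_le.2 hn)
  set C : ℝ := 2 ^ (2 * k) - 1 with hCdef
  have hC : 0 ≤ C := by
    have : (1 : ℝ) ≤ 2 ^ (2 * k) := one_le_pow₀ (by norm_num)
    linarith
  set f : ℕ → ℝ := fun n =>
    ((((n + 1) + 1 : ℕ) : ℝ) ^ (2 * k) - (((n + 1 : ℕ)) : ℝ) ^ (2 * k))
        * ((starRingEnd ℂ) (a (n + 1)) * a (n + 2)).im with hfdef
  set g : ℕ → ℝ := fun n => (((n + 1 : ℕ) : ℝ)) ^ (2 * k) * ‖a (n + 1)‖ ^ 2 with hgdef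
  set s : ℕ → ℝ := fun n => (((n + 1 : ℕ) : ℝ)) ^ (2 * k) * ‖a (n + 2)‖ ^ 2 with hsdef
  set h : ℕ → ℝ := fun n => C * (g n + s n) / 2 with hhdef
  -- vanishing for large n
  have hfz : ∀ n ∉ Finset.range (N + 1), f n = 0 := by
    intro n hn
    have hn' : N < n + 1 := by
      have := Finset.mem_range.not.mp hn
      omega
    simp [hfdef, hz _ hn']
  have hgz : ∀ n ∉ Finset.range (N + 1), g n = 0 := by
    intro n hn
    have hn' : N < n + 1 := by
      have := Finset.mem_range.not.mp hn
      omega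
    simp [hgdef, hz _ hn']
  have hsz : ∀ n ∉ Finset.range (N + 1), s n = 0 := by
    intro n hn
    have hn' : N < n + 2 := by
      have := Finset.mem_range.not.mp hn
      omega
    simp [hsdef, hz _ hn']
  have hhz : ∀ n ∉ Finset.range (N + 1), h n = 0 := by
    intro n hn
    simp [hhdef, hgz n hn, hsz n hn]
  have hsumf : Summable f := summable_of_ne_finset_zero hfz
  have hsumg : Summable g := summable_of_ne_finset_zero hgz
  have hsums : Summable s := summable_of_ne_finset_zero hsz
  have hsumh : Summable h := summable_of_ne_finset_zero hhz
  have hsumfabs : Summable fun n => |f n| := by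
    apply summable_of_ne_finset_zero (s := Finset.range (N + 1))
    intro n hn
    simp [hfz n hn]
  -- g and s are nonneg
  have hg0 : ∀ n, 0 ≤ g n := fun n => by positivity
  have hs0 : ∀ n, 0 ≤ s n := fun n => by positivity
  -- termwise bound
  have hterm : ∀ n, |f n| ≤ h n := by
    intro n
    have hm1 : (1 : ℝ) ≤ ((n + 1 : ℕ) : ℝ) := by exact_mod_cast Nat.one_le_iff_ne_zero.mpr (by omega)
    have hle : ((n + 1 : ℕ) : ℝ) ≤ (((n + 1) + 1 : ℕ) : ℝ) := by push_cast; linarith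
    have hc0 : 0 ≤ (((n + 1) + 1 : ℕ) : ℝ) ^ (2 * k) - ((n + 1 : ℕ) : ℝ) ^ (2 * k) := by
      have := pow_le_pow_left₀ (by positivity : (0:ℝ) ≤ ((n + 1 : ℕ) : ℝ)) hle (2 * k)
      linarith
    have hc1 : (((n + 1) + 1 : ℕ) : ℝ) ^ (2 * k) - ((n + 1 : ℕ) : ℝ) ^ (2 * k)
        ≤ C * ((n + 1 : ℕ) : ℝ) ^ (2 * k) := by
      have h2 : (((n + 1) + 1 : ℕ) : ℝ) ^ (2 * k) ≤ (2 * ((n + 1 : ℕ) : ℝ)) ^ (2 * k) := by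
        apply pow_le_pow_left₀ (by positivity)
        push_cast; linarith
      have h3 : (2 * ((n + 1 : ℕ) : ℝ)) ^ (2 * k) = 2 ^ (2 * k) * ((n + 1 : ℕ) : ℝ) ^ (2 * k) :=
        mul_pow 2 _ (2 * k)
      have hmk : (0:ℝ) ≤ ((n + 1 : ℕ) : ℝ) ^ (2 * k) := by positivity
      rw [hCdef]
      nlinarith
    have him : |((starRingEnd ℂ) (a (n + 1)) * a (n + 2)).im|
        ≤ (‖a (n + 1)‖ ^ 2 + ‖a (n + 2)‖ ^ 2) / 2 := by
      have h1 : |((starRingEnd ℂ) (a (n + 1)) * a (n + 2)).im|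
          ≤ ‖(starRingEnd ℂ) (a (n + 1)) * a (n + 2)‖ := Complex.abs_im_le_norm _
      have h2 : ‖(starRingEnd ℂ) (a (n + 1)) * a (n + 2)‖ = ‖a (n + 1)‖ * ‖a (n + 2)‖ := by
        rw [norm_mul, RCLike.norm_conj]
      nlinarith [sq_nonneg (‖a (n + 1)‖ - ‖a (n + 2)‖)]
    simp only [hfdef, hhdef, hgdef, hsdef]
    rw [abs_mul, _root_.abs_of_nonneg hc0]
    calc ((((n + 1) + 1 : ℕ) : ℝ) ^ (2 * k) - ((n + 1 : ℕ) : ℝ) ^ (2 * k))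
          * |((starRingEnd ℂ) (a (n + 1)) * a (n + 2)).im|
        ≤ (C * ((n + 1 : ℕ) : ℝ) ^ (2 * k)) * ((‖a (n + 1)‖ ^ 2 + ‖a (n + 2)‖ ^ 2) / 2) :=
          mul_le_mul hc1 him (abs_nonneg _) (by positivity)
      _ = C * (((n + 1 : ℕ) : ℝ) ^ (2 * k) * ‖a (n + 1)‖ ^ 2
            + ((n + 1 : ℕ) : ℝ) ^ (2 * k) * ‖a (n + 2)‖ ^ 2) / 2 := by ring
  -- shift bound : ∑ s ≤ ∑ g
  have hshift : ∑' n, s n ≤ ∑' n, g n := by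
    have h1 : ∀ n, s n ≤ g (n + 1) := by
      intro n
      have : (((n + 1 : ℕ) : ℝ)) ^ (2 * k) ≤ (((n + 2 : ℕ) : ℝ)) ^ (2 * k) := by
        apply pow_le_pow_left₀ (by positivity)
        exact_mod_cast Nat.le_succ (n + 1)
      rw [hsdef, hgdef]
      simp only
      have hnrm : (0:ℝ) ≤ ‖a (n + 2)‖ ^ 2 := by positivity
      calc ((n + 1 : ℕ) : ℝ) ^ (2 * k) * ‖a (n + 2)‖ ^ 2
          ≤ ((n + 2 : ℕ) : ℝ) ^ (2 * k) * ‖a (n + 2)‖ ^ 2 := by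
            exact mul_le_mul_of_nonneg_right this hnrm
        _ = ((n + 1 + 1 : ℕ) : ℝ) ^ (2 * k) * ‖a (n + 1 + 1)‖ ^ 2 := rfl
    have hsumg' : Summable fun n => g (n + 1) := by
      exact_mod_cast (summable_nat_add_iff 1).mpr hsumg
    have h2 : ∑' n, s n ≤ ∑' n, g (n + 1) := Summable.tsum_le_tsum h1 hsums hsumg'
    have h3 : ∑' n, g n = g 0 + ∑' n, g (n + 1) := Summable.tsum_eq_zero_add hsumg
    have := hg0 0
    linarith
  -- combine
  calc |∑' n, f n| = ‖∑' n, f n‖ := (Real.norm_eq_abs _).symm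
    _ ≤ ∑' n, ‖f n‖ := norm_tsum_le_tsum_norm (by simpa using hsumfabs)
    _ = ∑' n, |f n| := by simp [Real.norm_eq_abs]
    _ ≤ ∑' n, h n := Summable.tsum_le_tsum (fun n => hterm n) hsumfabs hsumh
    _ = C / 2 * (∑' n, g n + ∑' n, s n) := by
        rw [← Summable.tsum_add hsumg hsums, ← tsum_mul_left]
        congr 1 with n
        rw [hhdef]; ring
    _ ≤ C * ∑' n, g n := by nlinarith [tsum_nonneg (L := SummationFilter.unconditional ℕ) hg0, tsum_nonneg (L := SummationFilter.unconditional ℕ) hs0]
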